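/- Under the Setup, suppose in addition that for any two edges {e,f} and {g,h} of G with e < f and g < h, one of e < f ≤ g < h, g < h ≤ e < f, e ≤ g < h ≤ f, g ≤ e < f ≤ h holds, and that for each x ∈ {1, …, n}, I(x) is the inclusion-minimal pair (a, b) such that {a, b} is an edge of G with a < x < b (such edges exist, e.g. {0, n+1}, and by the nesting property the pairs (a,b) of edges with a < x < b are totally ordered by interval inclusion, so the minimal one is well-defined). Then the checks pass at every vertex x ∈ {1, …, n}. -/

import Mathlib

/-- The Setup: a graph on `{0, 1, …, n+1}` (modelled as `Fin (n+2)`) containing the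
path `0–1–⋯–(n+1)`, the edge `{0, n+1}`, and whose every other edge has both
endpoints in `{1, …, n}`. -/
def SetupGraph (n : ℕ) (G : SimpleGraph (Fin (n + 2))) : Prop :=
  (∀ i : Fin (n + 2), ∀ _hi : (i : ℕ) ≤ n, G.Adj i ⟨(i : ℕ) + 1, by omega⟩) ∧
  G.Adj ⟨0, by omega⟩ ⟨n + 1, by omega⟩ ∧
  (∀ u v : Fin (n + 2), G.Adj u v →
    ((u : ℕ) + 1 = (v : ℕ)) ∨ ((v : ℕ) + 1 = (u : ℕ)) ∨
    ((u : ℕ) = 0 ∧ (v : ℕ) = n + 1) ∨ ((v : ℕ) = 0 ∧ (u : ℕ) = n + 1) ∨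
    (1 ≤ (u : ℕ) ∧ (u : ℕ) ≤ n ∧ 1 ≤ (v : ℕ) ∧ (v : ℕ) ≤ n))

/-- The checks of the verification algorithm pass at vertex `x ∈ {1, …, n}`,
where `I x = (a, b)` is the interval certificate of `x`. -/
def ChecksPassAt (n : ℕ) (G : SimpleGraph (Fin (n + 2))) (I : Fin (n + 2) → ℤ × ℤ)
    (x : Fin (n + 2)) : Prop :=
  -- (i) `a < x < b` and all neighbors lie in `[a, b]`
  ((I x).1 < ((x : ℕ) : ℤ) ∧ ((x : ℕ) : ℤ) < (I x).2) ∧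
  (∀ y, G.Adj x y → (I x).1 ≤ ((y : ℕ) : ℤ) ∧ ((y : ℕ) : ℤ) ≤ (I x).2) ∧
  -- (ii) consecutive larger neighbors `y < z`: `I y = (x, z)`
  (∀ y z, G.Adj x y → G.Adj x z → x < y → y < z →
    (∀ w, G.Adj x w → ¬(y < w ∧ w < z)) → I y = (((x : ℕ) : ℤ), ((z : ℕ) : ℤ))) ∧
  -- (iii) consecutive smaller neighbors `y < z`: `I z = (y, x)`
  (∀ y z, G.Adj x y → G.Adj x z → y < z → z < x →
    (∀ w, G.Adj x w → ¬(y < w ∧ w < z)) → I z = (((y : ℕ) : ℤ), ((x : ℕ) : ℤ))) ∧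
  -- (iv) if the largest neighbor `y` satisfies `y < b` then `I y = (a, b)`
  (∀ y, G.Adj x y → x < y → (∀ z, G.Adj x z → z ≤ y) →
    ((y : ℕ) : ℤ) < (I x).2 → I y = I x) ∧
  -- (v) if the smallest neighbor `y` satisfies `a < y` then `I y = (a, b)`
  (∀ y, G.Adj x y → y < x → (∀ z, G.Adj x z → y ≤ z) →
    (I x).1 < ((y : ℕ) : ℤ) → I y = I x) ∧
  -- (vi) neighbors `y` whose interval has `x` as an endpoint
  (∀ y, G.Adj x y →
    ((I y).1 = ((x : ℕ) : ℤ) →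
      (∃ d : Fin (n + 2), ((d : ℕ) : ℤ) = (I y).2 ∧ G.Adj x d) ∧
      (I x).1 ≤ (I y).1 ∧ (I y).2 ≤ (I x).2 ∧ I y ≠ I x) ∧
    ((I y).2 = ((x : ℕ) : ℤ) →
      (∃ c : Fin (n + 2), ((c : ℕ) : ℤ) = (I y).1 ∧ G.Adj c x) ∧
      (I x).1 ≤ (I y).1 ∧ (I y).2 ≤ (I x).2 ∧ I y ≠ I x))


/-- Completeness: if any two edges of `G` are nested or non-overlapping and `I x` is the
inclusion-minimal pair `(a, b)` such that `{a, b}` is an edge of `G` with `a < x < b`,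
then the checks pass at every vertex `x ∈ {1, …, n}`. -/
theorem path_outerplanar_implies_checks (n : ℕ) (hn : 1 ≤ n)
    (G : SimpleGraph (Fin (n + 2))) (hG : SetupGraph n G)
    (I : Fin (n + 2) → ℤ × ℤ)
    (hI0 : I ⟨0, by omega⟩ = (-1, (n : ℤ) + 2))
    (hIn : I ⟨n + 1, by omega⟩ = (-1, (n : ℤ) + 2))
    (hnest : ∀ e f g h : Fin (n + 2), G.Adj e f → G.Adj g h → e < f → g < h →
      (f ≤ g) ∨ (h ≤ e) ∨ (e ≤ g ∧ h ≤ f) ∨ (g ≤ e ∧ f ≤ h))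
    (hmin : ∀ x : Fin (n + 2), 1 ≤ (x : ℕ) → (x : ℕ) ≤ n →
      ∃ a b : Fin (n + 2), G.Adj a b ∧ a < x ∧ x < b ∧
        I x = (((a : ℕ) : ℤ), ((b : ℕ) : ℤ)) ∧
        ∀ a' b' : Fin (n + 2), G.Adj a' b' → a' < x → x < b' → (a' ≤ a ∧ b ≤ b')) :
    ∀ x : Fin (n + 2), 1 ≤ (x : ℕ) → (x : ℕ) ≤ n → ChecksPassAt n G I x := by
  intro x hx1 hxn
  obtain ⟨a, b, hab, hax, hxb, hIx, hminx⟩ := hmin x hx1 hxn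
  have hab' : a < b := lt_trans hax hxb
  have hnb : ∀ y, G.Adj x y → a ≤ y ∧ y ≤ b := by
    intro y hxy
    rcases lt_trichotomy x y with h | h | h
    · have H := hnest x y a b hxy hab h hab'
      simp only [Fin.lt_def, Fin.le_def] at H hax hxb h ⊢
      omega
    · exact absurd (h ▸ hxy) (G.loopless.irrefl y)
    · have H := hnest y x a b hxy.symm hab h hab'
      simp only [Fin.lt_def, Fin.le_def] at H hax hxb h ⊢
      omega
  have hbn : (b : ℕ) ≤ n + 1 := Nat.lt_succ_iff.mp b.isLt
  refine ⟨⟨?_, ?_⟩, ?_, ?_, ?_, ?_, ?_, ?_⟩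
  · simp only [hIx]
    have := Fin.lt_def.mp hax; omega
  · simp only [hIx]
    have := Fin.lt_def.mp hxb; omega
  · intro y hxy
    have h := hnb y hxy
    simp only [Fin.le_def] at h
    simp only [hIx]
    omega
  · -- (ii) consecutive larger neighbors
    intro y z hxy hxz hlty hltz hcons
    have hy1 : 1 ≤ (y : ℕ) := by have := Fin.lt_def.mp hlty; omega
    have hyn : (y : ℕ) ≤ n := by
      have h1 := Fin.lt_def.mp hltz
      have h2 := Fin.le_def.mp (hnb z hxz).2
      omega
    obtain ⟨c, d, hcd, hcy, hyd, hIy, hminy⟩ := hmin y hy1 hyn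
    have hxc : x ≤ c ∧ d ≤ z := hminy x z hxz hlty hltz
    have hceq : c = x := by
      by_contra hne
      have hlt : x < c := lt_of_le_of_ne hxc.1 (fun h => hne h.symm)
      have H := hnest x y c d hxy hcd hlty (lt_trans hcy hyd)
      simp only [Fin.lt_def, Fin.le_def] at H hlt hcy hyd
      omega
    subst hceq
    have hdeq : d = z := by
      have h1 := hcons d hcd
      have h2 := Fin.le_def.mp hxc.2
      have h3 := Fin.lt_def.mp hyd
      apply Fin.ext
      simp only [Fin.lt_def, not_and, not_lt] at h1
      omega
    subst hdeq
    exact hIy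
  · -- (iii) consecutive smaller neighbors
    intro y z hxy hxz hyz hzx hcons
    have hz1 : 1 ≤ (z : ℕ) := by have := Fin.lt_def.mp hyz; omega
    have hzn : (z : ℕ) ≤ n := by have := Fin.lt_def.mp hzx; omega
    obtain ⟨c, d, hcd, hcz, hzd, hIz, hminz⟩ := hmin z hz1 hzn
    have hyc : y ≤ c ∧ d ≤ x := hminz y x hxy.symm hyz hzx
    have hdeq : d = x := by
      by_contra hne
      have hlt : d < x := lt_of_le_of_ne hyc.2 hne
      have H := hnest z x c d hxz.symm hcd hzx (lt_trans hcz hzd)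
      simp only [Fin.lt_def, Fin.le_def] at H hlt hcz hzd hzx
      omega
    subst hdeq
    have hceq : c = y := by
      have h1 := hcons c hcd.symm
      have h2 := Fin.le_def.mp hyc.1
      have h3 := Fin.lt_def.mp hcz
      apply Fin.ext
      simp only [Fin.lt_def, not_and, not_lt] at h1
      omega
    subst hceq
    exact hIz
  · -- (iv) largest neighbor
    intro y hxy hlt hmax hyb
    simp only [hIx] at hyb
    have hy1 : 1 ≤ (y : ℕ) := by have := Fin.lt_def.mp hlt; omega
    have hyn : (y : ℕ) ≤ n := by omega
    obtain ⟨c, d, hcd, hcy, hyd, hIy, hminy⟩ := hmin y hy1 hyn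
    have hac : a ≤ c ∧ d ≤ b := hminy a b hab (lt_trans hax hlt)
      (by rw [Fin.lt_def]; omega)
    have hcxlt : c < x := by
      rcases lt_or_ge c x with h | h
      · exact h
      · exfalso
        rcases eq_or_lt_of_le h with heq | h2
        · have hadj : G.Adj x d := by rw [heq]; exact hcd
          have hle := Fin.le_def.mp (hmax d hadj)
          have := Fin.lt_def.mp hyd
          omega
        · have H := hnest x y c d hxy hcd hlt (lt_trans hcy hyd)
          simp only [Fin.lt_def, Fin.le_def] at H h2 hcy hyd
          omega
    have h2 := hminx c d hcd hcxlt (lt_trans hlt hyd)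
    have hca : c = a := le_antisymm h2.1 hac.1
    have hdb : d = b := le_antisymm hac.2 h2.2
    rw [hIy, hIx, hca, hdb]
  · -- (v) smallest neighbor
    intro y hxy hlt hminN hay
    simp only [hIx] at hay
    have hy1 : 1 ≤ (y : ℕ) := by omega
    have hyn : (y : ℕ) ≤ n := by have := Fin.lt_def.mp hlt; omega
    obtain ⟨c, d, hcd, hcy, hyd, hIy, hminy⟩ := hmin y hy1 hyn
    have hac : a ≤ c ∧ d ≤ b := hminy a b hab
      (by rw [Fin.lt_def]; omega) (lt_trans hlt hxb)
    have hxdlt : x < d := by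
      rcases lt_or_ge x d with h | h
      · exact h
      · exfalso
        rcases eq_or_lt_of_le h with heq | h2
        · have hadj : G.Adj x c := by rw [← heq]; exact hcd.symm
          have hle := Fin.le_def.mp (hminN c hadj)
          have := Fin.lt_def.mp hcy
          omega
        · have H := hnest y x c d hxy.symm hcd hlt (lt_trans hcy hyd)
          simp only [Fin.lt_def, Fin.le_def] at H h2 hcy hyd hlt
          omega
    have h2 := hminx c d hcd (lt_trans hcy hlt) hxdlt
    have hca : c = a := le_antisymm h2.1 hac.1
    have hdb : d = b := le_antisymm hac.2 h2.2
    rw [hIy, hIx, hca, hdb]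
  · -- (vi)
    intro y hxy
    rcases Nat.lt_or_ge (y : ℕ) 1 with h0 | hy1
    · have hy : y = ⟨0, by omega⟩ := Fin.ext (by show (y : ℕ) = 0; omega)
      have h1 : (I y).1 = -1 := by rw [hy, hI0]
      have h2 : (I y).2 = (n : ℤ) + 2 := by rw [hy, hI0]
      constructor
      · intro h; rw [h1] at h; exfalso; omega
      · intro h; rw [h2] at h; exfalso; omega
    · rcases Nat.lt_or_ge n (y : ℕ) with hbig | hyn
      · have hy : y = ⟨n + 1, by omega⟩ := Fin.ext (by show (y : ℕ) = n + 1; have := y.isLt; omega)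
        have h1 : (I y).1 = -1 := by rw [hy, hIn]
        have h2 : (I y).2 = (n : ℤ) + 2 := by rw [hy, hIn]
        constructor
        · intro h; rw [h1] at h; exfalso; omega
        · intro h; rw [h2] at h; exfalso; omega
      · obtain ⟨c, d, hcd, hcy, hyd, hIy, hminy⟩ := hmin y hy1 hyn
        have hIy1 : (I y).1 = ((c : ℕ) : ℤ) := by rw [hIy]
        have hIy2 : (I y).2 = ((d : ℕ) : ℤ) := by rw [hIy]
        have hIx1 : (I x).1 = ((a : ℕ) : ℤ) := by rw [hIx]
        have hIx2 : (I x).2 = ((b : ℕ) : ℤ) := by rw [hIx]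
        constructor
        · intro h
          rw [hIy1] at h
          have hc : c = x := Fin.ext (by exact_mod_cast h)
          subst hc
          have hdb := Fin.le_def.mp (hnb d hcd).2
          have hacv := Fin.lt_def.mp hax
          refine ⟨⟨d, hIy2.symm, hcd⟩, ?_, ?_, ?_⟩
          · rw [hIx1, hIy1]; omega
          · rw [hIx2, hIy2]; omega
          · rw [hIx, hIy]
            intro heq
            simp only [Prod.mk.injEq] at heq
            omega
        · intro h
          rw [hIy2] at h
          have hd : d = x := Fin.ext (by exact_mod_cast h)
          subst hd
          have hca := Fin.le_def.mp (hnb c hcd.symm).1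
          have hxbv := Fin.lt_def.mp hxb
          refine ⟨⟨c, hIy1.symm, hcd⟩, ?_, ?_, ?_⟩
          · rw [hIx1, hIy1]; omega
          · rw [hIx2, hIy2]; omega
          · rw [hIx, hIy]
            intro heq
            simp only [Prod.mk.injEq] at heq
            omega
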